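/- arXiv:2106.07510 — 2 statements merged into one kernel-verified Lean document; each statement's English description precedes it below -/
import Mathlib

section
/- Let T : ℝ → ℝ₊ be measurable and bounded, G : ℝ₊ × ℝ → ℝ continuous and bounded, and define ρ(r,θ) = (1/(G(r,θ) r^{n-1})) ∫_r^{T(θ)} G(s,θ) s^{n-1} ds on D = {(r,θ) : 0 < r < T(θ)}. Then for every compactly supported C¹ function ϕ̃ on D̄ (smooth in r), one has -∫∫_D ρ(r,θ) G(r,θ) r^{n-1} ∂_r ϕ̃(r,θ) dr dθ = ∫_Θ ϕ̃(0,θ) (∫_0^{T(θ)} G(s,θ) s^{n-1} ds) dθ - ∫∫_D ϕ̃(r,θ) G(r,θ) r^{n-1} dr dθ, assuming G ≥ m > 0. -/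
open Real Set MeasureTheory intervalIntegral

private lemma otd_aux_meas (T : ℝ → ℝ) (hTmeas : Measurable T) (f : ℝ × ℝ → ℝ)
    (hf : Continuous f) (hTpos : ∀ θ, 0 < T θ) :
    StronglyMeasurable (fun θ => ∫ s in (0:ℝ)..(T θ), f (s, θ)) := by
  have hS : MeasurableSet {q : ℝ × ℝ | 0 < q.2 ∧ q.2 ≤ T q.1} := by
    apply MeasurableSet.inter
    · exact measurableSet_lt measurable_const measurable_snd
    · exact measurableSet_le measurable_snd (hTmeas.comp measurable_fst)
  have h1 : StronglyMeasurable (fun q : ℝ × ℝ =>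
      Set.indicator {q : ℝ × ℝ | 0 < q.2 ∧ q.2 ≤ T q.1} (fun q => f (q.2, q.1)) q) :=
    ((hf.comp (continuous_snd.prodMk continuous_fst)).stronglyMeasurable).indicator hS
  have h2 := h1.integral_prod_right' (ν := volume)
  have key : ∀ θ : ℝ, (∫ s : ℝ, Set.indicator {q : ℝ × ℝ | 0 < q.2 ∧ q.2 ≤ T q.1}
      (fun q => f (q.2, q.1)) (θ, s)) = ∫ s in (0:ℝ)..(T θ), f (s, θ) := by
    intro θ
    rw [intervalIntegral.integral_of_le (hTpos θ).le,
      ← MeasureTheory.integral_indicator measurableSet_Ioc]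
    congr 1
  simpa only [key] using h2

/-- Radial integration by parts identity showing that the pair (u, ρ) with u(r,θ) = -r
and ρ the explicit polar transport density solves the weak Monge–Kantorovich equation:
for every compactly supported C¹ test function ϕ,
-∫∫ ρ G r^(n-1) ∂_r ϕ = ∫_Θ ϕ(0,θ)(∫_0^{T(θ)} G s^(n-1) ds) dθ − ∫∫ ϕ G r^(n-1). -/
theorem otd_weak_mk_equation (n : ℕ) (hn : 2 ≤ n) (m CG CT : ℝ)
    (hm : 0 < m)
    (Θ : Set ℝ) (hΘ : MeasurableSet Θ) (hΘbd : Bornology.IsBounded Θ)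
    (T : ℝ → ℝ) (hTmeas : Measurable T)
    (hTpos : ∀ θ, 0 < T θ) (hTbd : ∀ θ, T θ ≤ CT)
    (G : ℝ × ℝ → ℝ) (hG : Continuous G)
    (hGm : ∀ p, m ≤ G p) (hGbd : ∀ p, G p ≤ CG)
    (ρ : ℝ × ℝ → ℝ)
    (hρ : ∀ p : ℝ × ℝ, ρ p =
      (∫ s in p.1..(T p.2), G (s, p.2) * s ^ (n - 1)) / (G p * p.1 ^ (n - 1)))
    (ϕ : ℝ × ℝ → ℝ) (hϕ : ContDiff ℝ 1 ϕ) (hϕsupp : HasCompactSupport ϕ) :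
    -(∫ θ in Θ, ∫ r in (0:ℝ)..(T θ),
        ρ (r, θ) * G (r, θ) * r ^ (n - 1) * deriv (fun r' => ϕ (r', θ)) r)
      = (∫ θ in Θ, ϕ (0, θ) * ∫ s in (0:ℝ)..(T θ), G (s, θ) * s ^ (n - 1))
        - ∫ θ in Θ, ∫ r in (0:ℝ)..(T θ), ϕ (r, θ) * G (r, θ) * r ^ (n - 1) := by
  have hCT : (0:ℝ) ≤ CT := le_trans (hTpos 0).le (hTbd 0)
  have hCG : (0:ℝ) ≤ CG := le_trans hm.le ((hGm 0).trans (hGbd 0))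
  have hg_cont : Continuous (fun p : ℝ × ℝ => G p * p.1 ^ (n - 1)) :=
    hG.mul (continuous_fst.pow _)
  obtain ⟨Cϕ, hCϕ⟩ := hϕsupp.exists_bound_of_continuous hϕ.continuous
  have hCϕ0 : (0:ℝ) ≤ Cϕ := le_trans (norm_nonneg _) (hCϕ 0)
  -- bound on the weight on the relevant region
  have hgbd : ∀ θ : ℝ, ∀ s ∈ Set.uIoc (0:ℝ) (T θ), ‖G (s, θ) * s ^ (n - 1)‖ ≤ CG * CT ^ (n - 1) := by
    intro θ s hs
    rw [Set.uIoc_of_le (hTpos θ).le] at hs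
    have h0 : 0 < s := hs.1
    have h1 : s ≤ CT := hs.2.trans (hTbd θ)
    have hGpos : 0 < G (s, θ) := lt_of_lt_of_le hm (hGm _)
    rw [Real.norm_eq_abs, abs_of_nonneg (by positivity)]
    exact mul_le_mul (hGbd _) (pow_le_pow_left₀ h0.le h1 _) (by positivity) hCG
  -- differentiability of the radial slice of ϕ
  have hφ1 : ∀ θ : ℝ, ∀ x : ℝ, HasDerivAt (fun r' => ϕ (r', θ)) (deriv (fun r' => ϕ (r', θ)) x) x := by
    intro θ x
    apply DifferentiableAt.hasDerivAt
    exact ((hϕ.differentiable one_ne_zero).comp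
      (differentiable_id.prodMk (differentiable_const θ))) x
  have hφ1c : ∀ θ : ℝ, Continuous (deriv (fun r' => ϕ (r', θ))) := by
    intro θ
    exact (hϕ.comp (contDiff_id.prodMk contDiff_const)).continuous_deriv le_rfl
  -- pointwise (in θ) integration by parts identity
  have inner : ∀ θ : ℝ,
      (∫ r in (0:ℝ)..(T θ), ρ (r, θ) * G (r, θ) * r ^ (n - 1) * deriv (fun r' => ϕ (r', θ)) r)
        = (∫ r in (0:ℝ)..(T θ), ϕ (r, θ) * G (r, θ) * r ^ (n - 1))
          - ϕ (0, θ) * ∫ s in (0:ℝ)..(T θ), G (s, θ) * s ^ (n - 1) := by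
    intro θ
    have hb0 : 0 < T θ := hTpos θ
    set b := T θ with hb
    have hgθ : Continuous (fun s : ℝ => G (s, θ) * s ^ (n - 1)) :=
      hg_cont.comp (continuous_id.prodMk continuous_const)
    have hg_int : ∀ c d : ℝ, IntervalIntegrable (fun s : ℝ => G (s, θ) * s ^ (n - 1)) volume c d :=
      fun c d => hgθ.intervalIntegrable c d
    set F : ℝ → ℝ := fun r => ∫ s in r..b, G (s, θ) * s ^ (n - 1) with hF
    -- Step 1: on (0, b) the integrand is F r * ∂_r ϕ
    have step1 : (∫ r in (0:ℝ)..b, ρ (r, θ) * G (r, θ) * r ^ (n - 1) * deriv (fun r' => ϕ (r', θ)) r)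
        = ∫ r in (0:ℝ)..b, F r * deriv (fun r' => ϕ (r', θ)) r := by
      apply intervalIntegral.integral_congr_ae
      filter_upwards with r hr
      rw [Set.uIoc_of_le hb0.le] at hr
      have hr0 : 0 < r := hr.1
      have hGpos : (0:ℝ) < G (r, θ) := lt_of_lt_of_le hm (hGm _)
      have hrp : (0:ℝ) < r ^ (n - 1) := pow_pos hr0 _
      rw [hρ (r, θ)]
      have hFr : F r = ∫ s in r..(T θ), G (s, θ) * s ^ (n - 1) := rfl
      rw [hFr]
      field_simp
    -- Step 2: integration by parts
    have hFderiv : ∀ x ∈ Set.uIcc (0:ℝ) b, HasDerivAt F (-(G (x, θ) * x ^ (n - 1))) x := by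
      intro x _
      have h1 : HasDerivAt (fun r : ℝ => ∫ s in (0:ℝ)..r, G (s, θ) * s ^ (n - 1))
          (G (x, θ) * x ^ (n - 1)) x :=
        intervalIntegral.integral_hasDerivAt_right (hg_int 0 x)
          (hgθ.stronglyMeasurableAtFilter _ _) hgθ.continuousAt
      have h2 : F = fun r => (∫ s in (0:ℝ)..b, G (s, θ) * s ^ (n - 1))
          - ∫ s in (0:ℝ)..r, G (s, θ) * s ^ (n - 1) := by
        funext r
        exact (intervalIntegral.integral_interval_sub_left (hg_int 0 b) (hg_int 0 r)).symm
      rw [h2]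
      exact ((hasDerivAt_const x (∫ s in (0:ℝ)..b, G (s, θ) * s ^ (n - 1))).sub h1).congr_deriv (by simp)
    have ibp := intervalIntegral.integral_mul_deriv_eq_deriv_mul hFderiv
      (fun x _ => hφ1 θ x) ((hg_int 0 b).neg) ((hφ1c θ).intervalIntegrable 0 b)
    have hFb : F b = 0 := intervalIntegral.integral_same
    have hneg : (∫ x in (0:ℝ)..b, -(G (x, θ) * x ^ (n - 1)) * ϕ (x, θ))
        = -∫ x in (0:ℝ)..b, ϕ (x, θ) * G (x, θ) * x ^ (n - 1) := by
      rw [← intervalIntegral.integral_neg]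
      apply intervalIntegral.integral_congr
      intro x _
      ring
    rw [step1, ibp, hFb, hneg]
    have hF0 : F 0 = ∫ s in (0:ℝ)..b, G (s, θ) * s ^ (n - 1) := rfl
    rw [hF0]
    ring
  -- measurability of the θ-integrands
  have hmeasB : StronglyMeasurable (fun θ => ∫ r in (0:ℝ)..(T θ), ϕ (r, θ) * G (r, θ) * r ^ (n - 1)) := by
    have := otd_aux_meas T hTmeas (fun p : ℝ × ℝ => ϕ p * G p * p.1 ^ (n - 1))
      ((hϕ.continuous.mul hG).mul (continuous_fst.pow _)) hTpos
    exact this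
  have hmeasI : StronglyMeasurable (fun θ => ∫ s in (0:ℝ)..(T θ), G (s, θ) * s ^ (n - 1)) := by
    have := otd_aux_meas T hTmeas (fun p : ℝ × ℝ => G p * p.1 ^ (n - 1)) hg_cont hTpos
    exact this
  -- finiteness of the measure on Θ
  haveI hfin : IsFiniteMeasure (volume.restrict Θ) := by
    constructor
    rw [Measure.restrict_apply_univ]
    exact hΘbd.measure_lt_top
  -- integrability of A and B
  have hboundI : ∀ θ : ℝ, ‖∫ s in (0:ℝ)..(T θ), G (s, θ) * s ^ (n - 1)‖ ≤ CG * CT ^ (n - 1) * CT := by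
    intro θ
    calc ‖∫ s in (0:ℝ)..(T θ), G (s, θ) * s ^ (n - 1)‖
        ≤ CG * CT ^ (n - 1) * |T θ - 0| :=
          intervalIntegral.norm_integral_le_of_norm_le_const (hgbd θ)
      _ ≤ CG * CT ^ (n - 1) * CT := by
          apply mul_le_mul_of_nonneg_left _ (by positivity)
          rw [sub_zero, abs_of_pos (hTpos θ)]
          exact hTbd θ
  have hIntA : IntegrableOn
      (fun θ => ϕ (0, θ) * ∫ s in (0:ℝ)..(T θ), G (s, θ) * s ^ (n - 1)) Θ := by
    apply MeasureTheory.Integrable.mono'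
      (integrable_const (Cϕ * (CG * CT ^ (n - 1) * CT)))
    · exact ((hϕ.continuous.comp (continuous_const.prodMk continuous_id)).stronglyMeasurable.mul
        hmeasI).aestronglyMeasurable
    · filter_upwards with θ
      rw [norm_mul]
      exact mul_le_mul (hCϕ _) (hboundI θ) (norm_nonneg _) hCϕ0
  have hIntB : IntegrableOn
      (fun θ => ∫ r in (0:ℝ)..(T θ), ϕ (r, θ) * G (r, θ) * r ^ (n - 1)) Θ := by
    apply MeasureTheory.Integrable.mono'
      (integrable_const (Cϕ * (CG * CT ^ (n - 1)) * CT))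
    · exact hmeasB.aestronglyMeasurable
    · filter_upwards with θ
      calc ‖∫ r in (0:ℝ)..(T θ), ϕ (r, θ) * G (r, θ) * r ^ (n - 1)‖
          ≤ Cϕ * (CG * CT ^ (n - 1)) * |T θ - 0| := by
            apply intervalIntegral.norm_integral_le_of_norm_le_const
            intro x hx
            rw [mul_assoc, norm_mul]
            exact mul_le_mul (hCϕ _) (hgbd θ x hx) (norm_nonneg _) hCϕ0
        _ ≤ Cϕ * (CG * CT ^ (n - 1)) * CT := by
            apply mul_le_mul_of_nonneg_left _ (by positivity)
            rw [sub_zero, abs_of_pos (hTpos θ)]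
            exact hTbd θ
  -- assemble
  have h1 : (∫ θ in Θ, ∫ r in (0:ℝ)..(T θ),
        ρ (r, θ) * G (r, θ) * r ^ (n - 1) * deriv (fun r' => ϕ (r', θ)) r)
      = ∫ θ in Θ, ((∫ r in (0:ℝ)..(T θ), ϕ (r, θ) * G (r, θ) * r ^ (n - 1))
          - ϕ (0, θ) * ∫ s in (0:ℝ)..(T θ), G (s, θ) * s ^ (n - 1)) :=
    MeasureTheory.integral_congr_ae (Filter.Eventually.of_forall fun θ => inner θ)
  rw [h1, ← MeasureTheory.integral_neg]
  simp only [neg_sub]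
  exact MeasureTheory.integral_sub hIntA hIntB
end

section
/- On the unit sphere S², with d(x) = arccos(x₃) the distance from the north pole p, let u(x) = -d(x) and ρ(x) = (1 + cos d(x))/ sin d(x) on S² \ {p, -p}. Then for every smooth function ϕ on S², ∫_{S²} ρ ⟨∇u, ∇ϕ⟩ dA = 4π ϕ(p) - ∫_{S²} ϕ dA, where ∇ and dA denote the spherical gradient and area measure. -/
open Real intervalIntegral

/-- The Monge–Kantorovich weak equation on the unit sphere S², written in geodesic polar
coordinates (r,φ) around the north pole p: with ρ(r) = (1+cos r)/sin r and u = -r,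
∫_0^{2π} ∫_0^π ρ(r) (-∂_r ϕ(r,φ)) sin r dr dφ = 4π ϕ(p) − ∫_0^{2π} ∫_0^π ϕ sin r dr dφ
for every C¹ test function ϕ (whose value at r = 0 is independent of φ, representing a
function on the sphere). -/
theorem sphere_weak_mk_equation
    (ϕ : ℝ × ℝ → ℝ) (hϕ : ContDiff ℝ 1 ϕ)
    (hpole : ∀ φ : ℝ, ϕ (0, φ) = ϕ (0, 0)) :
    (∫ φ in (0:ℝ)..(2 * π), ∫ r in (0:ℝ)..π,
        ((1 + Real.cos r) / Real.sin r) * (-(deriv (fun r' => ϕ (r', φ)) r)) * Real.sin r)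
      = 4 * π * ϕ (0, 0)
        - ∫ φ in (0:ℝ)..(2 * π), ∫ r in (0:ℝ)..π, ϕ (r, φ) * Real.sin r := by
  have hϕc : Continuous ϕ := hϕ.continuous
  -- the slice function and its properties
  have hψ : ∀ φ : ℝ, ContDiff ℝ 1 (fun r => ϕ (r, φ)) := fun φ =>
    hϕ.comp (contDiff_id.prodMk contDiff_const)
  -- Step 1: inner integral for each φ
  have inner_eq : ∀ φ : ℝ,
      (∫ r in (0:ℝ)..π,
        ((1 + Real.cos r) / Real.sin r) * (-(deriv (fun r' => ϕ (r', φ)) r)) * Real.sin r)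
      = 2 * ϕ (0, 0) - ∫ r in (0:ℝ)..π, ϕ (r, φ) * Real.sin r := by
    intro φ
    set ψ : ℝ → ℝ := fun r => ϕ (r, φ) with hψdef
    have hψ1 : ContDiff ℝ 1 ψ := hψ φ
    have hψd : ∀ x : ℝ, HasDerivAt ψ (deriv ψ x) x :=
      fun x => (hψ1.differentiable one_ne_zero x).hasDerivAt
    have hψd' : Continuous (deriv ψ) := hψ1.continuous_deriv le_rfl
    -- a.e. rewrite of the integrand
    have hcongr :
        (∫ r in (0:ℝ)..π,
          ((1 + Real.cos r) / Real.sin r) * (-(deriv ψ r)) * Real.sin r)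
        = ∫ r in (0:ℝ)..π, (1 + Real.cos r) * (-(deriv ψ r)) := by
      apply intervalIntegral.integral_congr_ae
      have hpi : ∀ᵐ x : ℝ, x ≠ π := by
        rw [MeasureTheory.ae_iff]
        simp
      filter_upwards [hpi] with x hxπ hx
      have hx' : x ∈ Set.Ioc (0:ℝ) π := by
        rwa [Set.uIoc_of_le Real.pi_pos.le] at hx
      have hsin : Real.sin x ≠ 0 := by
        have := Real.sin_pos_of_pos_of_lt_pi hx'.1 (lt_of_le_of_ne hx'.2 hxπ)
        linarith
      field_simp
    rw [hcongr]
    -- integration by parts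
    have hu : ∀ x ∈ Set.uIcc (0:ℝ) π, HasDerivAt (fun r => 1 + Real.cos r) (-Real.sin x) x :=
      fun x _ => (Real.hasDerivAt_cos x).const_add 1
    have hv : ∀ x ∈ Set.uIcc (0:ℝ) π, HasDerivAt ψ (deriv ψ x) x := fun x _ => hψd x
    have hibp := intervalIntegral.integral_mul_deriv_eq_deriv_mul hu hv
      (Continuous.intervalIntegrable (by continuity) 0 π)
      (hψd'.intervalIntegrable 0 π)
    have hnegint : (∫ x in (0:ℝ)..π, -Real.sin x * ψ x)
        = -(∫ x in (0:ℝ)..π, Real.sin x * ψ x) := by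
      rw [← intervalIntegral.integral_neg]
      apply intervalIntegral.integral_congr
      intro x _; ring
    have : (∫ r in (0:ℝ)..π, (1 + Real.cos r) * deriv ψ r)
        = -(2 * ψ 0) + ∫ r in (0:ℝ)..π, Real.sin r * ψ r := by
      rw [hibp, hnegint, Real.cos_pi, Real.cos_zero]
      ring
    have hrw : (∫ r in (0:ℝ)..π, (1 + Real.cos r) * (-(deriv ψ r)))
        = -(∫ r in (0:ℝ)..π, (1 + Real.cos r) * deriv ψ r) := by
      rw [← intervalIntegral.integral_neg]
      apply intervalIntegral.integral_congr
      intro x _; ring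
    rw [hrw, this]
    have hψ0 : ψ 0 = ϕ (0, 0) := hpole φ
    have hflip : (∫ r in (0:ℝ)..π, Real.sin r * ψ r)
        = ∫ r in (0:ℝ)..π, ϕ (r, φ) * Real.sin r := by
      apply intervalIntegral.integral_congr
      intro x _; simp [hψdef]; ring
    rw [hflip, hψ0]; ring
  -- Step 2: integrate over φ
  calc (∫ φ in (0:ℝ)..(2 * π), ∫ r in (0:ℝ)..π,
        ((1 + Real.cos r) / Real.sin r) * (-(deriv (fun r' => ϕ (r', φ)) r)) * Real.sin r)
      = ∫ φ in (0:ℝ)..(2 * π),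
          (2 * ϕ (0, 0) - ∫ r in (0:ℝ)..π, ϕ (r, φ) * Real.sin r) := by
        apply intervalIntegral.integral_congr
        intro φ _; exact inner_eq φ
    _ = (∫ φ in (0:ℝ)..(2 * π), (2 * ϕ (0, 0) : ℝ))
        - ∫ φ in (0:ℝ)..(2 * π), ∫ r in (0:ℝ)..π, ϕ (r, φ) * Real.sin r := by
        apply intervalIntegral.integral_sub
        · exact intervalIntegrable_const
        · have hc : Continuous (fun φ => ∫ r in (0:ℝ)..π, ϕ (r, φ) * Real.sin r) := by
            apply intervalIntegral.continuous_parametric_intervalIntegral_of_continuous'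
            exact (hϕc.comp (continuous_snd.prodMk continuous_fst)).mul
              (Real.continuous_sin.comp continuous_snd)
          exact hc.intervalIntegrable 0 (2 * π)
    _ = 4 * π * ϕ (0, 0)
        - ∫ φ in (0:ℝ)..(2 * π), ∫ r in (0:ℝ)..π, ϕ (r, φ) * Real.sin r := by
        rw [intervalIntegral.integral_const, smul_eq_mul]
        ring
end
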